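/- Suppose (θ_n)_{n≥1} is a BMM sequence with Euclidean proximal surrogates, i.e. g_n^i(θ) = f_n^i(θ) + (λ_n/2)‖θ − θ_{n−1}^i‖² for all n, i, where L_f ≤ λ_n ≤ Λ for a fixed constant Λ < ∞. Then for every n ≥ 1 and every b ∈ (0, 1]: Σ_{i=1}^m ⟨∇f_{n+1}^i(θ_n^i), θ_{n+1}^i − θ_n^i⟩ ≤ b·Σ_{i=1}^m inf{⟨∇f_{n+1}^i(θ_n^i), u⟩ : u ∈ E_i, ‖u‖ ≤ 1, θ_n^i + u ∈ Θ_i} + ((L_f + Λ)/2)·m·b² + (L_f/2)·Σ_{i=1}^m ‖θ_n^i − θ_{n+1}^i‖² + m·Δ_{n+1}, where ∇f_{n+1}^i denotes the gradient of the marginal map f_{n+1}^i on E_i. -/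

import Mathlib

open Filter RealInnerProductSpace

/-- The point of the product space whose first `i-1` blocks are those of `θ n`, whose
`i`-th block is `v`, and whose remaining blocks are those of `θ (n-1)`.  Thus the `i`-th
marginal objective at cycle `n` is `fun v => f (mixPt θ n i v)`, and the Euclidean proximal
surrogate is `fun v => f (mixPt θ n i v) + (λ_n/2) ‖v - θ (n-1) i‖²`. -/
def mixPt {m : ℕ} {X : Fin m → Type*} (θ : ℕ → ∀ i, X i) (n : ℕ) (i : Fin m)
    (v : X i) : ∀ j, X j :=
  Function.update (fun j => if (j : ℕ) < (i : ℕ) then θ n j else θ (n - 1) j) i v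

/-- The gradient `∇ f_n^i (v)` of the `i`-th marginal objective at cycle `n`,
evaluated at `v : E i`. -/
noncomputable def gradMarg {m : ℕ} {E : Fin m → Type*} [∀ i, NormedAddCommGroup (E i)]
    [∀ i, InnerProductSpace ℝ (E i)] [∀ i, CompleteSpace (E i)]
    (f : (∀ i, E i) → ℝ) (θ : ℕ → ∀ i, E i) (n : ℕ) (i : Fin m) (v : E i) : E i :=
  gradient (fun u => f (mixPt θ n i u)) v

/-- The `i`-th block partial gradient `∇_i f(x)`: the gradient at `x i` of the map
`u ↦ f (x with i-th block replaced by u)`. -/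
noncomputable def gradi {m : ℕ} {E : Fin m → Type*} [∀ i, NormedAddCommGroup (E i)]
    [∀ i, InnerProductSpace ℝ (E i)] [∀ i, CompleteSpace (E i)]
    (f : (∀ i, E i) → ℝ) (x : ∀ i, E i) (i : Fin m) : E i :=
  gradient (fun u => f (Function.update x i u)) (x i)

lemma descent_abs {F : Type*} [NormedAddCommGroup F] [InnerProductSpace ℝ F]
    [CompleteSpace F] {h : F → ℝ} (hd : Differentiable ℝ h) {L : ℝ} (hL : 0 ≤ L)
    (hlip : ∀ x y, ‖gradient h x - gradient h y‖ ≤ L * ‖x - y‖) (v d : F) :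
    |h (v + d) - h v - ⟪gradient h v, d⟫| ≤ L / 2 * ‖d‖ ^ 2 := by
  set G : ℝ → ℝ := fun t => ⟪gradient h (v + t • d), d⟫ with hG
  have key : ∀ t : ℝ, HasDerivAt (fun s : ℝ => h (v + s • d)) (G t) t := by
    intro t
    have h1 : HasFDerivAt h
        (InnerProductSpace.toDual ℝ F (gradient h (v + t • d))) (v + t • d) :=
      (hd _).hasGradientAt.hasFDerivAt
    have h2 : HasDerivAt (fun s : ℝ => v + s • d) d t := by
      simpa using ((hasDerivAt_id t).smul_const d).const_add v
    have h3 := h1.comp_hasDerivAt t h2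
    simp only [InnerProductSpace.toDual_apply_apply] at h3
    exact h3
  have contg : Continuous fun t : ℝ => gradient h (v + t • d) := by
    have lip : LipschitzWith (Real.toNNReal L) (gradient h) := by
      apply LipschitzWith.of_dist_le_mul
      intro x y
      rw [dist_eq_norm, dist_eq_norm]
      exact (hlip x y).trans_eq (by rw [Real.coe_toNNReal _ hL])
    exact lip.continuous.comp (by continuity)
  have cont : Continuous G := contg.inner continuous_const
  have eq1 : h (v + d) - h v = ∫ t in (0:ℝ)..1, G t := by
    rw [intervalIntegral.integral_eq_sub_of_hasDerivAt (fun t _ => key t)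
      (cont.intervalIntegrable 0 1)]
    simp
  have habs : ∀ t ∈ Set.Icc (0:ℝ) 1, |G t - G 0| ≤ L * ‖d‖ ^ 2 * t := by
    intro t ht
    have h0 : G 0 = ⟪gradient h v, d⟫ := by simp [hG]
    have h1 : ‖gradient h (v + t • d) - gradient h v‖ ≤ L * (t * ‖d‖) := by
      have := hlip (v + t • d) v
      simpa [norm_smul, abs_of_nonneg ht.1] using this
    have h2 : |⟪gradient h (v + t • d) - gradient h v, d⟫| ≤ L * (t * ‖d‖) * ‖d‖ :=
      (abs_real_inner_le_norm _ _).trans (mul_le_mul_of_nonneg_right h1 (norm_nonneg d))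
    rw [inner_sub_left] at h2
    rw [h0]
    calc |⟪gradient h (v + t • d), d⟫ - ⟪gradient h v, d⟫| ≤ L * (t * ‖d‖) * ‖d‖ := h2
      _ = L * ‖d‖ ^ 2 * t := by ring
  have contub : Continuous fun t : ℝ => G 0 + L * ‖d‖ ^ 2 * t := by continuity
  have contlb : Continuous fun t : ℝ => G 0 - L * ‖d‖ ^ 2 * t := by continuity
  have iub : ∫ t in (0:ℝ)..1, G t ≤ ∫ t in (0:ℝ)..1, (G 0 + L * ‖d‖ ^ 2 * t) := by
    apply intervalIntegral.integral_mono_on zero_le_one (cont.intervalIntegrable 0 1)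
      (contub.intervalIntegrable 0 1)
    intro t ht
    have := (abs_le.mp (habs t ht)).2
    linarith
  have ilb : ∫ t in (0:ℝ)..1, (G 0 - L * ‖d‖ ^ 2 * t) ≤ ∫ t in (0:ℝ)..1, G t := by
    apply intervalIntegral.integral_mono_on zero_le_one (contlb.intervalIntegrable 0 1)
      (cont.intervalIntegrable 0 1)
    intro t ht
    have := (abs_le.mp (habs t ht)).1
    linarith
  have cub : ∫ t in (0:ℝ)..1, (G 0 + L * ‖d‖ ^ 2 * t) = G 0 + L / 2 * ‖d‖ ^ 2 := by
    rw [intervalIntegral.integral_add intervalIntegrable_const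
      ((by fun_prop : Continuous fun t : ℝ => L * ‖d‖ ^ 2 * t).intervalIntegrable 0 1),
      intervalIntegral.integral_const,
      intervalIntegral.integral_const_mul]
    simp [integral_id]
    ring
  have clb : ∫ t in (0:ℝ)..1, (G 0 - L * ‖d‖ ^ 2 * t) = G 0 - L / 2 * ‖d‖ ^ 2 := by
    rw [intervalIntegral.integral_sub intervalIntegrable_const
      ((by fun_prop : Continuous fun t : ℝ => L * ‖d‖ ^ 2 * t).intervalIntegrable 0 1),
      intervalIntegral.integral_const,
      intervalIntegral.integral_const_mul]
    simp [integral_id]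
    ring
  have h0 : G 0 = ⟪gradient h v, d⟫ := by simp [hG]
  rw [abs_le]
  constructor <;> [skip; skip] <;> rw [eq1] <;> rw [← h0] <;>
    [linarith [ilb, clb]; linarith [iub, cub]]


lemma mixPt_update {m : ℕ} {X : Fin m → Type*} (θ : ℕ → ∀ i, X i) (n : ℕ) (i : Fin m)
    (v u : X i) : Function.update (mixPt θ n i v) i u = mixPt θ n i u := by
  simp [mixPt, Function.update_idem]

lemma gradMarg_eq_gradi {m : ℕ} {E : Fin m → Type*} [∀ i, NormedAddCommGroup (E i)]
    [∀ i, InnerProductSpace ℝ (E i)] [∀ i, CompleteSpace (E i)]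
    (f : (∀ i, E i) → ℝ) (θ : ℕ → ∀ i, E i) (n : ℕ) (i : Fin m) (v : E i) :
    gradMarg f θ n i v = gradi f (mixPt θ n i v) i := by
  unfold gradMarg gradi
  have h1 : (fun u => f (Function.update (mixPt θ n i v) i u))
      = fun u => f (mixPt θ n i u) := by
    funext u; rw [mixPt_update]
  rw [h1]
  congr 1
  simp [mixPt]

lemma diff_marg {m : ℕ} {E : Fin m → Type*} [∀ i, NormedAddCommGroup (E i)]
    [∀ i, InnerProductSpace ℝ (E i)] [∀ i, CompleteSpace (E i)]
    {f : (∀ i, E i) → ℝ} (hdiff : Differentiable ℝ f) (θ : ℕ → ∀ i, E i) (n : ℕ)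
    (i : Fin m) : Differentiable ℝ (fun v => f (mixPt θ n i v)) := by
  apply hdiff.comp
  rw [differentiable_pi]
  intro j
  rcases eq_or_ne j i with rfl | hj
  · simp only [mixPt, Function.update_self]
    exact differentiable_id
  · simp only [mixPt, Function.update_of_ne hj]
    exact differentiable_const _

lemma lip_marg {m : ℕ} {E : Fin m → Type*} [∀ i, NormedAddCommGroup (E i)]
    [∀ i, InnerProductSpace ℝ (E i)] [∀ i, CompleteSpace (E i)]
    (f : (∀ i, E i) → ℝ) {Lf : ℝ} (hLf : 0 ≤ Lf)
    (hsmooth : ∀ x y : ∀ i, E i,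
      Real.sqrt (∑ i, ‖gradi f x i - gradi f y i‖ ^ 2)
        ≤ Lf * Real.sqrt (∑ i, ‖x i - y i‖ ^ 2))
    (θ : ℕ → ∀ i, E i) (n : ℕ) (i : Fin m) (v w : E i) :
    ‖gradMarg f θ n i v - gradMarg f θ n i w‖ ≤ Lf * ‖v - w‖ := by
  rw [gradMarg_eq_gradi, gradMarg_eq_gradi]
  set x := mixPt θ n i v
  set y := mixPt θ n i w
  have h1 : ‖gradi f x i - gradi f y i‖
      ≤ Real.sqrt (∑ j, ‖gradi f x j - gradi f y j‖ ^ 2) := by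
    rw [show ‖gradi f x i - gradi f y i‖
        = Real.sqrt (‖gradi f x i - gradi f y i‖ ^ 2) from
      (Real.sqrt_sq (norm_nonneg _)).symm]
    apply Real.sqrt_le_sqrt
    exact Finset.single_le_sum (f := fun j => ‖gradi f x j - gradi f y j‖ ^ 2)
      (fun j _ => sq_nonneg _) (Finset.mem_univ i)
  have h2 : ∑ j, ‖x j - y j‖ ^ 2 = ‖v - w‖ ^ 2 := by
    rw [Finset.sum_eq_single i]
    · simp [x, y, mixPt]
    · intro j _ hj
      have : x j = y j := by simp [x, y, mixPt, Function.update_of_ne hj]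
      simp [this]
    · intro habs; exact absurd (Finset.mem_univ i) habs
  calc ‖gradi f x i - gradi f y i‖
      ≤ Real.sqrt (∑ j, ‖gradi f x j - gradi f y j‖ ^ 2) := h1
    _ ≤ Lf * Real.sqrt (∑ j, ‖x j - y j‖ ^ 2) := hsmooth x y
    _ = Lf * ‖v - w‖ := by rw [h2, Real.sqrt_sq (norm_nonneg _)]

/-- asymptotic first-order optimality inequality for the Euclidean
proximal BMM.  For a BMM sequence with proximal surrogates
`g_n^i(θ) = f_n^i(θ) + (λ_n/2)‖θ - θ_{n-1}^i‖²`, `L_f ≤ λ_n ≤ Λ`, for every `n ≥ 1` and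
every `b ∈ (0,1]`:
`∑_i ⟪∇f_{n+1}^i(θ_n^i), θ_{n+1}^i - θ_n^i⟫
   ≤ b ∑_i inf{⟪∇f_{n+1}^i(θ_n^i), u⟫ : ‖u‖ ≤ 1, θ_n^i + u ∈ Θ_i}
     + ((L_f + Λ)/2) m b² + (L_f/2) ∑_i ‖θ_n^i - θ_{n+1}^i‖² + m Δ_{n+1}`. -/
theorem bmm_proximal_first_order_optimality {m : ℕ} (hm : 1 ≤ m)
    {E : Fin m → Type*} [∀ i, NormedAddCommGroup (E i)]
    [∀ i, InnerProductSpace ℝ (E i)] [∀ i, FiniteDimensional ℝ (E i)]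
    (Θ : ∀ i, Set (E i)) (hne : ∀ i, (Θ i).Nonempty)
    (hclosed : ∀ i, IsClosed (Θ i)) (hconv : ∀ i, Convex ℝ (Θ i))
    (f : (∀ i, E i) → ℝ) (Lf : ℝ) (hLf : 0 < Lf)
    (hdiff : Differentiable ℝ f)
    (hsmooth : ∀ x y : ∀ i, E i,
      Real.sqrt (∑ i, ‖gradi f x i - gradi f y i‖ ^ 2)
        ≤ Lf * Real.sqrt (∑ i, ‖x i - y i‖ ^ 2))
    (fstar : ℝ) (hbdd : ∀ x, fstar ≤ f x)
    (θ : ℕ → ∀ i, E i) (hθ : ∀ n i, θ n i ∈ Θ i)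
    (lam : ℕ → ℝ) (Λbd : ℝ) (hlam : ∀ n, 1 ≤ n → Lf ≤ lam n ∧ lam n ≤ Λbd)
    (Δ : ℕ → ℝ) (hΔ : ∀ n, 1 ≤ n → 0 ≤ Δ n)
    (hopt : ∀ n, 1 ≤ n → ∀ i, ∀ v ∈ Θ i,
      f (mixPt θ n i (θ n i)) + lam n / 2 * ‖θ n i - θ (n - 1) i‖ ^ 2
        ≤ f (mixPt θ n i v) + lam n / 2 * ‖v - θ (n - 1) i‖ ^ 2 + Δ n) :
    ∀ n, 1 ≤ n → ∀ b : ℝ, 0 < b → b ≤ 1 →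
      ∑ i, ⟪gradMarg f θ (n + 1) i (θ n i), θ (n + 1) i - θ n i⟫
        ≤ b * ∑ i, sInf ((fun u => ⟪gradMarg f θ (n + 1) i (θ n i), u⟫) ''
              {u : E i | ‖u‖ ≤ 1 ∧ θ n i + u ∈ Θ i})
          + (Lf + Λbd) / 2 * (m : ℝ) * b ^ 2
          + Lf / 2 * ∑ i, ‖θ n i - θ (n + 1) i‖ ^ 2
          + (m : ℝ) * Δ (n + 1) := by
  intro n hn b hb hb1
  obtain ⟨hlamLo, hlamHi⟩ := hlam (n + 1) (by omega)
  have hlamNN : (0:ℝ) ≤ lam (n + 1) := hLf.le.trans hlamLo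
  have key : ∀ i, ⟪gradMarg f θ (n + 1) i (θ n i), θ (n + 1) i - θ n i⟫
      ≤ b * sInf ((fun u => ⟪gradMarg f θ (n + 1) i (θ n i), u⟫) ''
              {u : E i | ‖u‖ ≤ 1 ∧ θ n i + u ∈ Θ i})
        + (Lf + Λbd) / 2 * b ^ 2 + Lf / 2 * ‖θ n i - θ (n + 1) i‖ ^ 2 + Δ (n + 1) := by
    intro i
    set hi : E i → ℝ := fun v => f (mixPt θ (n + 1) i v) with hhi
    set g : E i := gradMarg f θ (n + 1) i (θ n i) with hg
    have hgg : ∀ v, gradient hi v = gradMarg f θ (n + 1) i v := fun v => rfl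
    have hdh : Differentiable ℝ hi := diff_marg hdiff θ (n + 1) i
    have hliph : ∀ x y, ‖gradient hi x - gradient hi y‖ ≤ Lf * ‖x - y‖ := by
      intro x y
      rw [hgg, hgg]
      exact lip_marg f hLf.le hsmooth θ (n + 1) i x y
    have step : ∀ u : E i, ‖u‖ ≤ 1 → θ n i + u ∈ Θ i →
        ⟪g, θ (n + 1) i - θ n i⟫ ≤ b * ⟪g, u⟫ + (Lf + Λbd) / 2 * b ^ 2
          + Lf / 2 * ‖θ n i - θ (n + 1) i‖ ^ 2 + Δ (n + 1) := by
      intro u hu1 huΘ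
      have hmem : θ n i + b • u ∈ Θ i := by
        have := (hconv i).add_smul_sub_mem (hθ n i) huΘ ⟨hb.le, hb1⟩
        simpa using this
      have hopt' := hopt (n + 1) (by omega) i (θ n i + b • u) hmem
      have hn1 : n + 1 - 1 = n := rfl
      rw [hn1] at hopt'
      have hnorm1 : ‖θ n i + b • u - θ n i‖ ^ 2 = b ^ 2 * ‖u‖ ^ 2 := by
        rw [add_sub_cancel_left, norm_smul, mul_pow, Real.norm_eq_abs, sq_abs]
      rw [hnorm1] at hopt'
      have d1 := descent_abs hdh hLf.le hliph (θ n i) (θ (n + 1) i - θ n i)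
      rw [add_sub_cancel] at d1
      have d2 := descent_abs hdh hLf.le hliph (θ n i) (b • u)
      have e2 : ⟪gradient hi (θ n i), b • u⟫ = b * ⟪g, u⟫ := by
        rw [hgg]; exact real_inner_smul_right _ _ _
      have e3 : ‖b • u‖ ^ 2 = b ^ 2 * ‖u‖ ^ 2 := by
        rw [norm_smul, mul_pow, Real.norm_eq_abs, sq_abs]
      rw [e2, e3] at d2
      rw [hgg] at d1
      rw [← hg] at d1
      obtain ⟨d1a, d1b⟩ := abs_le.mp d1
      obtain ⟨d2a, d2b⟩ := abs_le.mp d2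
      have hr0 : (0:ℝ) ≤ ‖u‖ ^ 2 := sq_nonneg _
      have hr1 : ‖u‖ ^ 2 ≤ 1 := pow_le_one₀ (norm_nonneg u) hu1
      have hb2 : (0:ℝ) ≤ b ^ 2 := sq_nonneg b
      have h1 : b ^ 2 * ‖u‖ ^ 2 ≤ b ^ 2 := mul_le_of_le_one_right hb2 hr1
      have hs0 : (0:ℝ) ≤ ‖θ (n + 1) i - θ n i‖ ^ 2 := sq_nonneg _
      have h2 : lam (n + 1) * (b ^ 2 * ‖u‖ ^ 2) ≤ Λbd * b ^ 2 := by
        calc lam (n + 1) * (b ^ 2 * ‖u‖ ^ 2) ≤ lam (n + 1) * b ^ 2 :=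
              mul_le_mul_of_nonneg_left h1 hlamNN
          _ ≤ Λbd * b ^ 2 := mul_le_mul_of_nonneg_right hlamHi hb2
      have h3 : Lf * (b ^ 2 * ‖u‖ ^ 2) ≤ Lf * b ^ 2 :=
        mul_le_mul_of_nonneg_left h1 hLf.le
      have h4 : Lf * ‖θ (n + 1) i - θ n i‖ ^ 2 ≤ lam (n + 1) * ‖θ (n + 1) i - θ n i‖ ^ 2 :=
        mul_le_mul_of_nonneg_right hlamLo hs0
      have hsrev : ‖θ n i - θ (n + 1) i‖ ^ 2 = ‖θ (n + 1) i - θ n i‖ ^ 2 := by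
        rw [norm_sub_rev]
      rw [hsrev]
      -- hopt' : hi (θ (n+1) i) + λ/2 * ‖θ(n+1)i - θ n i‖^2 ≤ hi (θ n i + b•u) + λ/2*(b^2‖u‖^2) + Δ
      linarith [hopt']
    -- now the sInf part
    have hTne : ((fun u => ⟪g, u⟫) ''
        {u : E i | ‖u‖ ≤ 1 ∧ θ n i + u ∈ Θ i}).Nonempty := by
      refine ⟨⟪g, 0⟫, ⟨0, ⟨by simp, by simpa using hθ n i⟩, rfl⟩⟩
    set K : ℝ := (Lf + Λbd) / 2 * b ^ 2 + Lf / 2 * ‖θ n i - θ (n + 1) i‖ ^ 2 + Δ (n + 1)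
      with hK
    have hlow : (⟪g, θ (n + 1) i - θ n i⟫ - K) / b
        ≤ sInf ((fun u => ⟪g, u⟫) '' {u : E i | ‖u‖ ≤ 1 ∧ θ n i + u ∈ Θ i}) := by
      apply le_csInf hTne
      rintro z ⟨u, ⟨hu1, huΘ⟩, rfl⟩
      rw [div_le_iff₀ hb]
      have := step u hu1 huΘ
      rw [hK]
      linarith
    have hmul := mul_le_mul_of_nonneg_left hlow hb.le
    rw [mul_div_cancel₀ _ hb.ne'] at hmul
    rw [hK] at hmul
    linarith
  calc ∑ i, ⟪gradMarg f θ (n + 1) i (θ n i), θ (n + 1) i - θ n i⟫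
      ≤ ∑ i, (b * sInf ((fun u => ⟪gradMarg f θ (n + 1) i (θ n i), u⟫) ''
              {u : E i | ‖u‖ ≤ 1 ∧ θ n i + u ∈ Θ i})
        + (Lf + Λbd) / 2 * b ^ 2 + Lf / 2 * ‖θ n i - θ (n + 1) i‖ ^ 2 + Δ (n + 1)) :=
        Finset.sum_le_sum (fun i _ => key i)
    _ = _ := by
        simp only [Finset.sum_add_distrib, Finset.sum_const, Finset.card_univ,
          Fintype.card_fin, nsmul_eq_mul, ← Finset.mul_sum]
        push_cast
        ring
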